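/- Define χ₀ ∈ X̄ by χ₀ = (r₀, s₀, r₀, 1) if s₀ ∈ Λ and χ₀ = (r₀, s₀, σ₀, ⌊1−τ₀⌋_T) if s₀ ∉ Λ. Then ℙ(r̄(0) = χ₀) = 1, and for every k ≥ 1 and every χ₁, …, χ_k ∈ X̄ one has ℙ(r̄(0)=χ₀, r̄(1)=χ₁, …, r̄(k)=χ_k) = ∏_{j=0}^{k−1} p̄_{χ_j, χ_{j+1}}. In other words, r̄ has the same finite-dimensional distributions as a time-homogeneous Markov chain on X̄ with transition matrix p̄ started at the deterministic state χ₀. -/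

import Mathlib

open MeasureTheory ProbabilityTheory

/-- `flT T k : Fin T` represents `⌊k⌋_T`, the unique element of `{1,…,T}` such that
`k − ⌊k⌋_T` is divisible by `T`; the element `d : Fin T` encodes the value `d.val + 1`. -/
def flT (T : ℕ) [NeZero T] (k : ℤ) : Fin T :=
  ⟨((k - 1) % (T : ℤ)).toNat, by
    have hT : (0:ℤ) < (T:ℤ) := by exact_mod_cast Nat.pos_of_ne_zero (NeZero.ne T)
    have h1 : 0 ≤ (k - 1) % (T:ℤ) := Int.emod_nonneg _ (ne_of_gt hT)
    have h2 : (k - 1) % (T:ℤ) < (T:ℤ) := Int.emod_lt_of_pos _ hT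
    omega⟩

/-- `τ(k)`: the most recent observation time `≤ k`, i.e. the largest `j ≤ k` with
`s j ∈ Λ`, and `τ₀` if no observation has occurred yet. -/
noncomputable def tauProc {M : ℕ} {Ω : Type*} (Λ : Set (Fin M)) (s : ℕ → Ω → Fin M)
    (τ0 : ℤ) (k : ℕ) (ω : Ω) : ℤ := by
  classical
  exact if ∃ j ≤ k, s j ω ∈ Λ then
    ((Nat.findGreatest (fun j => s j ω ∈ Λ) k : ℕ) : ℤ) else τ0

/-- `σ(k) = r(τ(k))` for `k ≥ t₀` and `σ₀` before the first observation. -/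
noncomputable def sigmaProc {N M : ℕ} {Ω : Type*} (Λ : Set (Fin M))
    (r : ℕ → Ω → Fin N) (s : ℕ → Ω → Fin M) (σ0 : Fin N) (k : ℕ) (ω : Ω) : Fin N := by
  classical
  exact if ∃ j ≤ k, s j ω ∈ Λ then r (Nat.findGreatest (fun j => s j ω ∈ Λ) k) ω else σ0

/-- The extended process `r̄(k) = (r(k), s(k), σ(k), ⌊k+1−τ(k)⌋_T)`. -/
noncomputable def rbar {N M : ℕ} (T : ℕ) [NeZero T] {Ω : Type*} (Λ : Set (Fin M))
    (r : ℕ → Ω → Fin N) (s : ℕ → Ω → Fin M) (τ0 : ℤ) (σ0 : Fin N) (k : ℕ) (ω : Ω) :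
    Fin N × Fin M × Fin N × Fin T :=
  (r k ω, s k ω, sigmaProc Λ r s σ0 k ω, flT T ((k : ℤ) + 1 - tauProc Λ s τ0 k ω))

/-- The transition matrix `p̄` on `X̄ = {1,…,N} × {1,…,M} × {1,…,N} × {1,…,T}`.
Recall that `δ : Fin T` encodes the value `δ.val + 1`, so `flT T 1 = 0` encodes the
value `1` and `δ + 1` (cyclic `Fin` addition) encodes `⌊δ + 1⌋_T`. -/
noncomputable def pbar {N M T : ℕ} [NeZero T] (P : Matrix (Fin N) (Fin N) ℝ)
    (Q : Matrix (Fin M) (Fin M) ℝ) (Λ : Set (Fin M))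
    (χ χ' : Fin N × Fin M × Fin N × Fin T) : ℝ := by
  classical
  exact
    if χ'.2.1 ∈ Λ then
      if χ'.1 = χ'.2.2.1 ∧ χ'.2.2.2 = flT T 1 then P χ.1 χ'.1 * Q χ.2.1 χ'.2.1 else 0
    else
      if χ'.2.2.1 = χ.2.2.1 ∧ χ'.2.2.2 = χ.2.2.2 + 1 then P χ.1 χ'.1 * Q χ.2.1 χ'.2.1 else 0

/-- A row-stochastic matrix. -/
def RowStochastic {I : Type*} [Fintype I] (P : I → I → ℝ) : Prop :=
  (∀ i j, 0 ≤ P i j) ∧ ∀ i, ∑ j, P i j = 1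

/-- The pair `(r, s)` is a time-homogeneous Markov chain with product transition
probabilities `P ⊗ Q`: conditional on any history of positive probability. -/
def IsPairMarkov {N M : ℕ} {Ω : Type*} [MeasurableSpace Ω] (μ : Measure Ω)
    (r : ℕ → Ω → Fin N) (s : ℕ → Ω → Fin M)
    (P : Matrix (Fin N) (Fin N) ℝ) (Q : Matrix (Fin M) (Fin M) ℝ) : Prop :=
  ∀ (k : ℕ) (a : ℕ → Fin N) (b : ℕ → Fin M),
    μ {ω | ∀ j ≤ k, r j ω = a j ∧ s j ω = b j} ≠ 0 →
    ∀ (α' : Fin N) (β' : Fin M),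
      ProbabilityTheory.cond μ {ω | ∀ j ≤ k, r j ω = a j ∧ s j ω = b j}
          {ω | r (k+1) ω = α' ∧ s (k+1) ω = β'}
        = ENNReal.ofReal (P (a k) α' * Q (b k) β')

/-- A time-homogeneous Markov chain on a (finite) state space `S` with transition
matrix `P`. -/
def IsMarkov {S : Type*} {Ω : Type*} [MeasurableSpace Ω] (μ : Measure Ω)
    (X : ℕ → Ω → S) (P : S → S → ℝ) : Prop :=
  ∀ (k : ℕ) (c : ℕ → S),
    μ {ω | ∀ i ≤ k, X i ω = c i} ≠ 0 →
    ∀ j : S,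
      ProbabilityTheory.cond μ {ω | ∀ i ≤ k, X i ω = c i} {ω | X (k+1) ω = j}
        = ENNReal.ofReal (P (c k) j)


/-! ### Auxiliary lemmas -/

lemma flT_succ (T : ℕ) [NeZero T] (k : ℤ) : flT T (k + 1) = flT T k + 1 := by
  have hT : (0:ℤ) < (T:ℤ) := by exact_mod_cast Nat.pos_of_ne_zero (NeZero.ne T)
  apply Fin.ext
  show ((k + 1 - 1) % (T:ℤ)).toNat = (((k - 1) % (T:ℤ)).toNat + (1 : Fin T).val) % T
  have h1 : 0 ≤ (k - 1) % (T:ℤ) := Int.emod_nonneg _ (ne_of_gt hT)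
  have hone : (1 : Fin T).val = 1 % T := rfl
  have key : ((k + 1 - 1) % (T:ℤ)) = (((k-1) % (T:ℤ)) + (1 % (T:ℤ))) % (T:ℤ) := by
    have : k + 1 - 1 = (k - 1) + 1 := by ring
    rw [this, Int.add_emod]
  have hcast : (((((k - 1) % (T:ℤ)).toNat + (1 : Fin T).val) % T : ℕ) : ℤ)
      = (((k-1) % (T:ℤ)) + (1 % (T:ℤ))) % (T:ℤ) := by
    rw [hone]
    push_cast [Int.natCast_mod, Int.toNat_of_nonneg h1]
    ring_nf
  omega

section
open scoped Classical in
/-- Deterministic recursion computing the `(σ, δ)` components from the `(a, b)` path. -/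
noncomputable def sd {N M : ℕ} (T : ℕ) [NeZero T] (Λ : Set (Fin M)) (τ0 : ℤ) (σ0 : Fin N)
    (a : ℕ → Fin N) (b : ℕ → Fin M) : ℕ → Fin N × Fin T
  | 0 => if b 0 ∈ Λ then (a 0, flT T 1) else (σ0, flT T (1 - τ0))
  | (k+1) => if b (k+1) ∈ Λ then (a (k+1), flT T 1)
             else ((sd T Λ τ0 σ0 a b k).1, (sd T Λ τ0 σ0 a b k).2 + 1)
end

lemma sd_congr {N M : ℕ} (T : ℕ) [NeZero T] (Λ : Set (Fin M)) (τ0 : ℤ) (σ0 : Fin N)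
    (a a' : ℕ → Fin N) (b b' : ℕ → Fin M) (k : ℕ)
    (h : ∀ j ≤ k, a j = a' j ∧ b j = b' j) :
    sd T Λ τ0 σ0 a b k = sd T Λ τ0 σ0 a' b' k := by
  induction k with
  | zero =>
    simp only [sd]
    rw [(h 0 le_rfl).1, (h 0 le_rfl).2]
  | succ k ih =>
    have ih' := ih (fun j hj => h j (hj.trans (Nat.le_succ k)))
    simp only [sd, ih']
    rw [(h (k+1) le_rfl).1, (h (k+1) le_rfl).2]

lemma sigma_tau_eq_sd {N M : ℕ} (T : ℕ) [NeZero T] {Ω : Type*} (Λ : Set (Fin M))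
    (r : ℕ → Ω → Fin N) (s : ℕ → Ω → Fin M) (τ0 : ℤ) (σ0 : Fin N) (ω : Ω) (k : ℕ) :
    (sigmaProc Λ r s σ0 k ω, flT T ((k : ℤ) + 1 - tauProc Λ s τ0 k ω))
      = sd T Λ τ0 σ0 (fun j => r j ω) (fun j => s j ω) k := by
  classical
  induction k with
  | zero =>
    have hex : (∃ j ≤ 0, s j ω ∈ Λ) ↔ s 0 ω ∈ Λ := by
      constructor
      · rintro ⟨j, hj, h⟩; rwa [Nat.le_zero.mp hj] at h
      · exact fun h => ⟨0, le_rfl, h⟩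
    by_cases h : s 0 ω ∈ Λ
    · simp only [sigmaProc, tauProc, sd, hex, if_pos h]
      norm_num [Nat.findGreatest]
    · simp only [sigmaProc, tauProc, sd, hex, if_pos h, if_neg h]
      norm_num
  | succ k ih =>
    by_cases h : s (k+1) ω ∈ Λ
    · have hex : ∃ j ≤ k+1, s j ω ∈ Λ := ⟨k+1, le_rfl, h⟩
      have hfg : Nat.findGreatest (fun j => s j ω ∈ Λ) (k+1) = k+1 := by
        rw [Nat.findGreatest_succ]; simp [h]
      simp only [sigmaProc, tauProc, sd, if_pos hex, if_pos h, hfg]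
      have harg : ((k+1:ℕ):ℤ) + 1 - ((k+1:ℕ):ℤ) = 1 := by ring
      rw [harg]
    · have hex2 : (∃ j ≤ k+1, s j ω ∈ Λ) ↔ (∃ j ≤ k, s j ω ∈ Λ) := by
        constructor
        · rintro ⟨j, hj, hjΛ⟩
          rcases Nat.eq_or_lt_of_le hj with h' | h'
          · exact absurd (h' ▸ hjΛ) h
          · exact ⟨j, Nat.lt_succ_iff.mp h', hjΛ⟩
        · rintro ⟨j, hj, hjΛ⟩; exact ⟨j, hj.trans (Nat.le_succ k), hjΛ⟩
      have hfg : Nat.findGreatest (fun j => s j ω ∈ Λ) (k+1)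
          = Nat.findGreatest (fun j => s j ω ∈ Λ) k := by
        rw [Nat.findGreatest_succ]; simp [h]
      have hσ : sigmaProc Λ r s σ0 (k+1) ω = sigmaProc Λ r s σ0 k ω := by
        simp only [sigmaProc, hex2, hfg]
      have hτ : tauProc Λ s τ0 (k+1) ω = tauProc Λ s τ0 k ω := by
        simp only [tauProc, hex2, hfg]
      have harg : ((k+1:ℕ):ℤ) + 1 - tauProc Λ s τ0 k ω
          = ((k:ℤ) + 1 - tauProc Λ s τ0 k ω) + 1 := by push_cast; ring
      rw [hσ, hτ, harg, flT_succ]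
      simp only [sd, if_neg h, ← ih]

lemma rbar_eq_sd {N M : ℕ} (T : ℕ) [NeZero T] {Ω : Type*} (Λ : Set (Fin M))
    (r : ℕ → Ω → Fin N) (s : ℕ → Ω → Fin M) (τ0 : ℤ) (σ0 : Fin N) (ω : Ω) (k : ℕ) :
    rbar T Λ r s τ0 σ0 k ω
      = (r k ω, s k ω, sd T Λ τ0 σ0 (fun j => r j ω) (fun j => s j ω) k) := by
  unfold rbar
  rw [sigma_tau_eq_sd]

lemma cond_to_inter {Ω : Type} [MeasurableSpace Ω] (μ : Measure Ω) [IsProbabilityMeasure μ]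
    (A B : Set Ω) (p : ℝ) (hA : μ A ≠ 0)
    (h : ProbabilityTheory.cond μ A B = ENNReal.ofReal p) :
    μ (A ∩ B) ≤ ENNReal.ofReal p * μ A := by
  have hA' : μ A ≠ ⊤ := measure_ne_top μ A
  have hres : μ.restrict A B = ENNReal.ofReal p * μ A := by
    have h2 : (μ A)⁻¹ * μ.restrict A B = ENNReal.ofReal p := by rw [← h]; rfl
    calc μ.restrict A B = (μ A) * ((μ A)⁻¹ * μ.restrict A B) := by
          rw [← mul_assoc, ENNReal.mul_inv_cancel hA hA', one_mul]
      _ = ENNReal.ofReal p * μ A := by rw [h2, mul_comm]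
  calc μ (A ∩ B) = μ (B ∩ A) := by rw [Set.inter_comm]
    _ ≤ μ.restrict A B := Measure.le_restrict_apply _ _
    _ = ENNReal.ofReal p * μ A := hres

lemma markov_step {N M : ℕ} {Ω : Type} [MeasurableSpace Ω] (μ : Measure Ω)
    [IsProbabilityMeasure μ]
    (r : ℕ → Ω → Fin N) (s : ℕ → Ω → Fin M)
    (P : Matrix (Fin N) (Fin N) ℝ) (Q : Matrix (Fin M) (Fin M) ℝ)
    (hP : RowStochastic P) (hQ : RowStochastic Q) (hM : IsPairMarkov μ r s P Q)
    (k : ℕ) (a : ℕ → Fin N) (b : ℕ → Fin M)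
    (hA : μ {ω | ∀ j ≤ k, r j ω = a j ∧ s j ω = b j} ≠ 0) (α' : Fin N) (β' : Fin M) :
    μ ({ω | ∀ j ≤ k, r j ω = a j ∧ s j ω = b j} ∩ {ω | r (k+1) ω = α' ∧ s (k+1) ω = β'})
      = ENNReal.ofReal (P (a k) α' * Q (b k) β')
        * μ {ω | ∀ j ≤ k, r j ω = a j ∧ s j ω = b j} := by
  classical
  set A : Set Ω := {ω | ∀ j ≤ k, r j ω = a j ∧ s j ω = b j} with hAdef
  set B : Fin N × Fin M → Set Ω := fun i => {ω | r (k+1) ω = i.1 ∧ s (k+1) ω = i.2} with hBdef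
  set f : Fin N × Fin M → ENNReal := fun i => ENNReal.ofReal (P (a k) i.1 * Q (b k) i.2) * μ A
    with hfdef
  set g : Fin N × Fin M → ENNReal := fun i => μ (A ∩ B i) with hgdef
  have hpnn : ∀ i : Fin N × Fin M, 0 ≤ P (a k) i.1 * Q (b k) i.2 :=
    fun i => mul_nonneg (hP.1 _ _) (hQ.1 _ _)
  have hle : ∀ i : Fin N × Fin M, g i ≤ f i := fun i =>
    cond_to_inter μ A (B i) _ hA (hM k a b hA i.1 i.2)
  have hfne : ∀ i : Fin N × Fin M, f i ≠ ⊤ :=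
    fun i => ENNReal.mul_ne_top ENNReal.ofReal_ne_top (measure_ne_top μ A)
  have hgne : ∀ i : Fin N × Fin M, g i ≠ ⊤ :=
    fun i => fun ht => hfne i (top_le_iff.mp (ht ▸ hle i))
  have hsumf : ∑ i : Fin N × Fin M, f i = μ A := by
    rw [← Finset.sum_mul]
    have : ∑ i : Fin N × Fin M, ENNReal.ofReal (P (a k) i.1 * Q (b k) i.2) = 1 := by
      rw [← ENNReal.ofReal_sum_of_nonneg (fun i _ => hpnn i)]
      have : ∑ i : Fin N × Fin M, P (a k) i.1 * Q (b k) i.2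
          = (∑ α : Fin N, P (a k) α) * (∑ β : Fin M, Q (b k) β) := by
        rw [Finset.sum_mul_sum, Fintype.sum_prod_type]
      rw [this, hP.2, hQ.2, one_mul, ENNReal.ofReal_one]
    rw [this, one_mul]
  have hcover : A ⊆ ⋃ i : Fin N × Fin M, A ∩ B i := by
    intro ω hω
    exact Set.mem_iUnion.mpr ⟨(r (k+1) ω, s (k+1) ω), hω, rfl, rfl⟩
  have hsumg : μ A ≤ ∑ i : Fin N × Fin M, g i :=
    le_trans (measure_mono hcover) (measure_iUnion_fintype_le μ _)
  have hsum_eq : ∑ i : Fin N × Fin M, g i = ∑ i : Fin N × Fin M, f i :=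
    le_antisymm (Finset.sum_le_sum fun i _ => hle i) (hsumf ▸ hsumg)
  have htr : ∀ i ∈ Finset.univ, (g i).toReal = (f i).toReal := by
    rw [← Finset.sum_eq_sum_iff_of_le
      (fun i _ => ENNReal.toReal_mono (hfne i) (hle i))]
    rw [← ENNReal.toReal_sum (fun i _ => hgne i), ← ENNReal.toReal_sum (fun i _ => hfne i),
      hsum_eq]
  exact (ENNReal.toReal_eq_toReal_iff' (hgne (α', β')) (hfne (α', β'))).mp
    (htr (α', β') (Finset.mem_univ _))

lemma cylinder_event_succ {N M : ℕ} {Ω : Type} (r : ℕ → Ω → Fin N) (s : ℕ → Ω → Fin M)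
    (a : ℕ → Fin N) (b : ℕ → Fin M) (k : ℕ) :
    {ω | ∀ j ≤ k + 1, r j ω = a j ∧ s j ω = b j}
      = {ω | ∀ j ≤ k, r j ω = a j ∧ s j ω = b j}
        ∩ {ω | r (k+1) ω = a (k+1) ∧ s (k+1) ω = b (k+1)} := by
  ext ω
  constructor
  · intro h
    exact ⟨fun j hj => h j (hj.trans (Nat.le_succ k)), h (k+1) le_rfl⟩
  · rintro ⟨h1, h2⟩ j hj
    rcases Nat.eq_or_lt_of_le hj with h' | h'
    · rw [h']; exact h2
    · exact h1 j (Nat.lt_succ_iff.mp h')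

lemma cylinder_measure {N M : ℕ} {Ω : Type} [MeasurableSpace Ω] (μ : Measure Ω)
    [IsProbabilityMeasure μ]
    (r : ℕ → Ω → Fin N) (s : ℕ → Ω → Fin M)
    (P : Matrix (Fin N) (Fin N) ℝ) (Q : Matrix (Fin M) (Fin M) ℝ)
    (hP : RowStochastic P) (hQ : RowStochastic Q) (hM : IsPairMarkov μ r s P Q)
    (r₀ : Fin N) (s₀ : Fin M) (hr0 : ∀ ω, r 0 ω = r₀) (hs0 : ∀ ω, s 0 ω = s₀)
    (a : ℕ → Fin N) (b : ℕ → Fin M) (ha : a 0 = r₀) (hb : b 0 = s₀) (k : ℕ) :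
    μ {ω | ∀ j ≤ k, r j ω = a j ∧ s j ω = b j}
      = ∏ j ∈ Finset.range k, ENNReal.ofReal (P (a j) (a (j+1)) * Q (b j) (b (j+1))) := by
  induction k with
  | zero =>
    have : {ω : Ω | ∀ j ≤ 0, r j ω = a j ∧ s j ω = b j} = Set.univ := by
      ext ω
      simp only [Set.mem_setOf_eq, Set.mem_univ, iff_true]
      intro j hj
      rw [Nat.le_zero.mp hj, ha, hb]
      exact ⟨hr0 ω, hs0 ω⟩
    rw [this, measure_univ, Finset.range_zero, Finset.prod_empty]
  | succ k ih =>
    rw [cylinder_event_succ, Finset.prod_range_succ, ← ih]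
    by_cases h0 : μ {ω | ∀ j ≤ k, r j ω = a j ∧ s j ω = b j} = 0
    · rw [h0, zero_mul]
      exact le_antisymm (h0 ▸ measure_mono Set.inter_subset_left) zero_le
    · rw [markov_step μ r s P Q hP hQ hM k a b h0 (a (k+1)) (b (k+1)), mul_comm]

lemma pbar_nonneg {N M T : ℕ} [NeZero T] (P : Matrix (Fin N) (Fin N) ℝ)
    (Q : Matrix (Fin M) (Fin M) ℝ) (hP : RowStochastic P) (hQ : RowStochastic Q)
    (Λ : Set (Fin M)) (χ χ' : Fin N × Fin M × Fin N × Fin T) :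
    0 ≤ pbar P Q Λ χ χ' := by
  unfold pbar
  split_ifs <;> first | exact mul_nonneg (hP.1 _ _) (hQ.1 _ _) | exact le_rfl

/-- With `χ₀ = (r₀, s₀, r₀, 1)` if `s₀ ∈ Λ` and
`χ₀ = (r₀, s₀, σ₀, ⌊1 − τ₀⌋_T)` if `s₀ ∉ Λ`, one has `ℙ(r̄(0) = χ₀) = 1`, and for
every `k ≥ 1` and every `χ₁, …, χ_k ∈ X̄`,
`ℙ(r̄(0)=χ₀, …, r̄(k)=χ_k) = ∏_{j=0}^{k−1} p̄_{χ_j, χ_{j+1}}`; i.e. `r̄` has the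
finite-dimensional distributions of a time-homogeneous Markov chain with transition
matrix `p̄` started at the deterministic state `χ₀`. -/
theorem rbar_finite_dimensional_distributions
    {n m N M T : ℕ} [NeZero n] [NeZero m] [NeZero N] [NeZero M] [NeZero T]
    (P : Matrix (Fin N) (Fin N) ℝ) (Q : Matrix (Fin M) (Fin M) ℝ)
    (hP : RowStochastic P) (hQ : RowStochastic Q)
    (Λ : Set (Fin M)) (hΛ : Λ.Nonempty)
    (Ω : Type) [MeasurableSpace Ω] (μ : Measure Ω) [IsProbabilityMeasure μ]
    (r : ℕ → Ω → Fin N) (s : ℕ → Ω → Fin M) (r₀ : Fin N) (s₀ : Fin M)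
    (hr0 : ∀ ω, r 0 ω = r₀) (hs0 : ∀ ω, s 0 ω = s₀)
    (hMarkov : IsPairMarkov μ r s P Q)
    (hinf : μ {ω | {k : ℕ | s k ω ∈ Λ}.Infinite} = 1)
    (τ₀ : ℤ) (hτ₀ : τ₀ < 0) (σ₀ : Fin N)
    (χ₀ : Fin N × Fin M × Fin N × Fin T)
    (hχ₀mem : s₀ ∈ Λ → χ₀ = (r₀, s₀, r₀, flT T 1))
    (hχ₀nmem : s₀ ∉ Λ → χ₀ = (r₀, s₀, σ₀, flT T (1 - τ₀))) :
    μ {ω | rbar T Λ r s τ₀ σ₀ 0 ω = χ₀} = 1 ∧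
    ∀ k : ℕ, 1 ≤ k → ∀ χ : ℕ → Fin N × Fin M × Fin N × Fin T, χ 0 = χ₀ →
      μ {ω | ∀ j ≤ k, rbar T Λ r s τ₀ σ₀ j ω = χ j}
        = ENNReal.ofReal (∏ j ∈ Finset.range k, pbar P Q Λ (χ j) (χ (j+1))) := by
  classical
  constructor
  · have hset : {ω | rbar T Λ r s τ₀ σ₀ 0 ω = χ₀} = Set.univ := by
      ext ω
      simp only [Set.mem_setOf_eq, Set.mem_univ, iff_true]
      rw [rbar_eq_sd]
      simp only [sd]
      by_cases h : s₀ ∈ Λ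
      · rw [hs0 ω, if_pos h, hr0 ω, hχ₀mem h]
      · rw [hs0 ω, if_neg h, hr0 ω, hχ₀nmem h]
    rw [hset, measure_univ]
  · intro k hk χ hχ0
    have ha0 : (χ 0).1 = r₀ := by
      by_cases h : s₀ ∈ Λ
      · rw [hχ0, hχ₀mem h]
      · rw [hχ0, hχ₀nmem h]
    have hb0 : (χ 0).2.1 = s₀ := by
      by_cases h : s₀ ∈ Λ
      · rw [hχ0, hχ₀mem h]
      · rw [hχ0, hχ₀nmem h]
    have hsd0 : (χ 0).2.2
        = sd T Λ τ₀ σ₀ (fun i => (χ i).1) (fun i => (χ i).2.1) 0 := by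
      simp only [sd]
      by_cases h : s₀ ∈ Λ
      · rw [hb0, if_pos h, ha0, hχ0, hχ₀mem h]
      · rw [hb0, if_neg h, hχ0, hχ₀nmem h]
    by_cases H : ∀ j ≤ k, (χ j).2.2
        = sd T Λ τ₀ σ₀ (fun i => (χ i).1) (fun i => (χ i).2.1) j
    · -- consistent case
      have hset : {ω | ∀ j ≤ k, rbar T Λ r s τ₀ σ₀ j ω = χ j}
          = {ω | ∀ j ≤ k, r j ω = (χ j).1 ∧ s j ω = (χ j).2.1} := by
        ext ω
        simp only [Set.mem_setOf_eq]
        constructor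
        · intro h j hj
          have hj' := h j hj
          rw [rbar_eq_sd] at hj'
          exact ⟨congrArg Prod.fst hj', congrArg (fun p => p.2.1) hj'⟩
        · intro h j hj
          rw [rbar_eq_sd]
          have hsdj : sd T Λ τ₀ σ₀ (fun i => r i ω) (fun i => s i ω) j
              = sd T Λ τ₀ σ₀ (fun i => (χ i).1) (fun i => (χ i).2.1) j :=
            sd_congr T Λ τ₀ σ₀ _ _ _ _ j (fun i hi => h i (hi.trans hj))
          rw [hsdj, ← H j hj, (h j hj).1, (h j hj).2]
      rw [hset, cylinder_measure μ r s P Q hP hQ hMarkov r₀ s₀ hr0 hs0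
        (fun i => (χ i).1) (fun i => (χ i).2.1) ha0 hb0 k,
        ENNReal.ofReal_prod_of_nonneg (fun j _ => pbar_nonneg P Q hP hQ Λ _ _)]
      refine Finset.prod_congr rfl (fun j hj => ?_)
      have hjk := Finset.mem_range.mp hj
      have h1 := H j (le_of_lt hjk)
      have h2 := H (j+1) hjk
      congr 1
      unfold pbar
      by_cases hmem : (χ (j+1)).2.1 ∈ Λ
      · have hsdsucc : sd T Λ τ₀ σ₀ (fun i => (χ i).1) (fun i => (χ i).2.1) (j+1)
            = ((χ (j+1)).1, flT T 1) := by
          simp only [sd]; rw [if_pos hmem]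
        rw [if_pos hmem, if_pos ⟨by rw [h2, hsdsucc], by rw [h2, hsdsucc]⟩]
      · have hsdsucc : sd T Λ τ₀ σ₀ (fun i => (χ i).1) (fun i => (χ i).2.1) (j+1)
            = ((sd T Λ τ₀ σ₀ (fun i => (χ i).1) (fun i => (χ i).2.1) j).1,
               (sd T Λ τ₀ σ₀ (fun i => (χ i).1) (fun i => (χ i).2.1) j).2 + 1) := by
          simp only [sd]; rw [if_neg hmem]
        rw [if_neg hmem, if_pos ⟨by rw [h2, hsdsucc, h1], by rw [h2, hsdsucc, h1]⟩]
    · -- inconsistent case: event is empty and some factor is zero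
      have hempty : {ω | ∀ j ≤ k, rbar T Λ r s τ₀ σ₀ j ω = χ j} = ∅ := by
        ext ω
        simp only [Set.mem_setOf_eq, Set.mem_empty_iff_false, iff_false]
        intro h
        apply H
        intro j hj
        have hcomp : ∀ i, i ≤ k → r i ω = (χ i).1 ∧ s i ω = (χ i).2.1 := by
          intro i hi
          have hi' := h i hi
          rw [rbar_eq_sd] at hi'
          exact ⟨congrArg Prod.fst hi', congrArg (fun p => p.2.1) hi'⟩
        have hj' := h j hj
        rw [rbar_eq_sd] at hj'
        have h22 : sd T Λ τ₀ σ₀ (fun i => r i ω) (fun i => s i ω) j = (χ j).2.2 :=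
          congrArg (fun p => p.2.2) hj'
        rw [← h22]
        exact sd_congr T Λ τ₀ σ₀ _ _ _ _ j
          (fun i hi => hcomp i (hi.trans hj))
      rw [hempty, measure_empty]
      have hex : ∃ j, j ≤ k ∧ (χ j).2.2
          ≠ sd T Λ τ₀ σ₀ (fun i => (χ i).1) (fun i => (χ i).2.1) j := by
        push_neg at H; exact H
      obtain ⟨hjk, hjne⟩ := Nat.find_spec hex
      have hj0 : Nat.find hex ≠ 0 := by
        intro h0
        rw [h0] at hjne
        exact hjne hsd0
      obtain ⟨i, hi⟩ := Nat.exists_eq_succ_of_ne_zero hj0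
      rw [hi] at hjk hjne
      have himin : (χ i).2.2
          = sd T Λ τ₀ σ₀ (fun l => (χ l).1) (fun l => (χ l).2.1) i := by
        by_contra hc
        exact Nat.find_min hex (by omega) ⟨by omega, hc⟩
      have hpbar0 : pbar P Q Λ (χ i) (χ (i+1)) = 0 := by
        unfold pbar
        by_cases hmem : (χ (i+1)).2.1 ∈ Λ
        · rw [if_pos hmem, if_neg]
          rintro ⟨h1, h2⟩
          apply hjne
          simp only [sd]
          rw [if_pos hmem, h1, ← h2]
        · rw [if_neg hmem, if_neg]
          rintro ⟨h1, h2⟩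
          apply hjne
          simp only [sd]
          rw [if_neg hmem, ← himin, ← h1, ← h2]
      rw [Finset.prod_eq_zero (Finset.mem_range.mpr (show i < k by omega)) hpbar0,
        ENNReal.ofReal_zero]
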